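/- Let $\delta \in (0,1)$, $C > 0$, and $c_1 \le (1-\delta)/(4C)$. Suppose $(B_k)_{k \ge 0}$ is a sequence of positive reals with $B_0 = 1$ satisfying $B_{k+1} \le B_k (1 + c_1 C B_k \delta^{k_0 - k})$ for all $0 \le k < k_0$. Then $B_k \le 2$ for all $0 \le k \le k_0$. -/

import Mathlib

theorem stmt_0 (δ C c₁ : ℝ) (hδ : δ ∈ Set.Ioo (0:ℝ) 1) (hC : 0 < C)
    (hc₁ : c₁ ≤ (1 - δ) / (4 * C)) (k₀ : ℕ) (B : ℕ → ℝ)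
    (hBpos : ∀ k, 0 < B k) (hB0 : B 0 = 1)
    (hrec : ∀ k, k < k₀ → B (k + 1) ≤ B k * (1 + c₁ * C * B k * δ ^ (k₀ - k))) :
    ∀ k ≤ k₀, B k ≤ 2 := by
  obtain ⟨hδ0, hδ1⟩ := hδ
  have h1δ : 0 < 1 - δ := by linarith
  set c : ℝ := max c₁ 0 with hc
  have hc0 : 0 ≤ c := le_max_right _ _
  have hcle : c ≤ (1 - δ) / (4 * C) := max_le hc₁ (by positivity)
  set e : ℝ := 4 * c * C / (1 - δ) with he
  have he0 : 0 ≤ e := by positivity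
  have he1 : e ≤ 1 := by
    rw [he, div_le_one h1δ]
    have h5 : 4 * c * C ≤ 4 * ((1 - δ) / (4 * C)) * C := by nlinarith
    calc 4 * c * C ≤ 4 * ((1 - δ) / (4 * C)) * C := h5
      _ = 1 - δ := by field_simp
  have key : ∀ k ≤ k₀, B k ≤ 1 + e * δ ^ (k₀ - k + 1) := by
    intro k hk
    induction k with
    | zero =>
      rw [hB0]
      have : 0 ≤ δ ^ (k₀ - 0 + 1) := by positivity
      nlinarith
    | succ n ih =>
      have hn : n ≤ k₀ := Nat.le_of_succ_le hk
      have ihn := ih hn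
      have hnk : n < k₀ := hk
      have hpow1 : δ ^ (k₀ - n + 1) ≤ 1 := pow_le_one₀ hδ0.le hδ1.le
      have hB2 : B n ≤ 2 := by nlinarith
      have hpowEq : k₀ - n = k₀ - (n + 1) + 1 := by omega
      have hrecn := hrec n hnk
      have hpos := hBpos n
      have hd : 0 < δ ^ (k₀ - n) := pow_pos hδ0 _
      have hmul : δ ^ (k₀ - n + 1) = δ ^ (k₀ - n) * δ := by ring
      rcases le_or_gt c₁ 0 with h | h
      · have hterm : c₁ * C * B n * δ ^ (k₀ - n) ≤ 0 := by
          nlinarith [mul_pos (mul_pos hC hpos) hd]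
        have hBn1 : B (n + 1) ≤ B n := by
          have h2 : B n * (1 + c₁ * C * B n * δ ^ (k₀ - n))
              = B n + B n * (c₁ * C * B n * δ ^ (k₀ - n)) := by ring
          have h3 : B n * (c₁ * C * B n * δ ^ (k₀ - n)) ≤ 0 :=
            mul_nonpos_of_nonneg_of_nonpos hpos.le hterm
          linarith [hrecn, h2.le]
        have hpd : δ ^ (k₀ - n + 1) ≤ δ ^ (k₀ - n) := by
          rw [hmul]; nlinarith
        rw [← hpowEq]
        nlinarith [mul_le_mul_of_nonneg_left hpd he0]
      · have hceq : c = c₁ := max_eq_left h.le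
        have heq : e * (1 - δ) = 4 * c₁ * C := by
          rw [he, hceq]; field_simp
        have hBsq : c₁ * C * B n * B n ≤ 4 * c₁ * C := by
          have h4 : 0 ≤ c₁ * C * ((2 - B n) * (2 + B n)) :=
            mul_nonneg (mul_pos h hC).le (mul_nonneg (by linarith) (by linarith))
          nlinarith
        have hrec2 : B (n + 1) ≤ B n + c₁ * C * B n * B n * δ ^ (k₀ - n) := by
          have h6 : B n * (1 + c₁ * C * B n * δ ^ (k₀ - n))
              = B n + c₁ * C * B n * B n * δ ^ (k₀ - n) := by ring
          linarith [hrecn, h6.le]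
        have hx : c₁ * C * B n * B n * δ ^ (k₀ - n) ≤ 4 * c₁ * C * δ ^ (k₀ - n) :=
          mul_le_mul_of_nonneg_right hBsq hd.le
        have hy : 4 * c₁ * C * δ ^ (k₀ - n) = e * δ ^ (k₀ - n) - e * δ ^ (k₀ - n + 1) := by
          rw [hmul, ← heq]; ring
        rw [← hpowEq]
        linarith
  intro k hk
  have h1 := key k hk
  have h2 : δ ^ (k₀ - k + 1) ≤ 1 := pow_le_one₀ hδ0.le hδ1.le
  have h3 : 0 ≤ δ ^ (k₀ - k + 1) := by positivity
  nlinarith
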